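/- Let E/F be a finite tamely ramified Galois extension of nonarchimedean local fields. Then the subgroup C_E of E^× is stable under the action of the Galois group Gal(E/F): for every σ ∈ Gal(E/F) one has σ(C_E) = C_E. -/

import Mathlib

noncomputable section

/-- The value group `ℤₘ₀ = WithZero (Multiplicative ℤ)` of a discretely valued field. -/
abbrev Zm0 : Type := WithZero (Multiplicative ℤ)

/-- The normalized additive valuation `ν_K` attached to a `ℤₘ₀`-valued field:
`ν_K x = n` when `Valued.v x = ofAdd (-n)`, and `ν_K 0 = 0` by convention. -/
def nval (K : Type*) [Field K] [Valued K Zm0] (x : K) : ℤ :=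
  if h : (Valued.v x : Zm0) = 0 then 0 else - Multiplicative.toAdd (WithZero.unzero h)

/-- The ring of integers `o_K` of a `ℤₘ₀`-valued field. -/
abbrev ringOfIntegers (K : Type*) [Field K] [Valued K Zm0] : ValuationSubring K :=
  (Valued.v : Valuation K Zm0).valuationSubring

/-- The residue field `k_K`. -/
abbrev residueField (K : Type*) [Field K] [Valued K Zm0] : Type _ :=
  IsLocalRing.ResidueField (ringOfIntegers K)

/-- `K` is a nonarchimedean local field: complete with respect to its (normalized)
discrete valuation, with finite residue field. -/
class IsNALocalField (K : Type*) [Field K] [Valued K Zm0] : Prop where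
  complete : CompleteSpace K
  surj : Function.Surjective (Valued.v : K → Zm0)
  finiteResidueField : Finite (residueField K)

/-- `π` is a uniformizer of `K`, i.e. `ν_K π = 1`. -/
def IsUniformizer (K : Type*) [Field K] [Valued K Zm0] (π : K) : Prop :=
  nval K π = 1

/-- `z` is a root of unity of order prime to `p`. -/
def IsRootOfUnityPrimeTo (p : ℕ) {K : Type*} [Field K] (z : K) : Prop :=
  ∃ n : ℕ, 0 < n ∧ Nat.Coprime n p ∧ z ^ n = 1

/-- The subgroup `C_E` of `E^×` generated by a chosen uniformizer `π_E` and the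
group `μ_{q-1}` of `(q-1)`-st roots of unity in `E`, where `q = #k_E`. -/
def CGroup (E : Type*) [Field E] [Valued E Zm0] (πE : Eˣ) : Subgroup Eˣ :=
  Subgroup.closure ({πE} ∪ {u : Eˣ | u ^ (Nat.card (residueField E) - 1) = 1})

section Aux
variable (E : Type*) [Field E] [Valued E Zm0]

lemma integersE : Valuation.Integers (Valued.v : Valuation E Zm0) (ringOfIntegers E) :=
  { hom_inj := Subtype.coe_injective
    map_le_one := fun r => r.2
    exists_of_le_one := fun r hr => ⟨⟨r, hr⟩, rfl⟩ }

lemma vnat_le_one (k : ℕ) : (Valued.v ((k : E)) : Zm0) ≤ 1 := by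
  induction k with
  | zero => simp
  | succ k ih =>
    push_cast
    exact le_trans (Valued.v.map_add _ _) (max_le ih (le_of_eq (Valued.v.map_one)))

lemma vint_le_one (k : ℤ) : (Valued.v ((k : E)) : Zm0) ≤ 1 := by
  induction k using Int.rec with
  | ofNat k => simpa using vnat_le_one E k
  | negSucc k =>
    rw [Int.cast_negSucc, Valuation.map_neg]
    exact_mod_cast vnat_le_one E (k+1)

variable {E}

/-- If the residue of an integer is zero then its valuation is < 1. -/
lemma v_lt_one_of_residue_eq_zero {x : ringOfIntegers E}
    (hx : IsLocalRing.residue (ringOfIntegers E) x = 0) :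
    (Valued.v (x : E) : Zm0) < 1 := by
  have hmem : x ∈ IsLocalRing.maximalIdeal (ringOfIntegers E) :=
    Ideal.Quotient.eq_zero_iff_mem.mp hx
  have hnu : ¬ IsUnit x := (IsLocalRing.mem_maximalIdeal x).mp hmem
  have hne : (Valued.v (x : E) : Zm0) ≠ 1 := by
    intro h
    exact hnu ((integersE E).isUnit_of_one' h)
  exact lt_of_le_of_ne x.2 hne

lemma nval_pos_iff {x : E} (hx : x ≠ 0) :
    0 < nval E x ↔ (Valued.v x : Zm0) < 1 := by
  have h0 : (Valued.v x : Zm0) ≠ 0 := Valued.v.ne_zero_iff.mpr hx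
  rw [nval, dif_neg h0]
  have key : ∀ (w : Zm0) (hw : w ≠ 0),
      (0 < -Multiplicative.toAdd (WithZero.unzero hw) ↔ w < 1) := by
    intro w hw
    obtain ⟨u, rfl⟩ := WithZero.ne_zero_iff_exists.mp hw
    rw [WithZero.unzero_coe, WithZero.coe_lt_one]
    have : u < 1 ↔ Multiplicative.toAdd u < Multiplicative.toAdd (1 : Multiplicative ℤ) :=
      Multiplicative.toAdd_lt.symm
    rw [this, toAdd_one]
    omega
  exact key _ h0

end Aux

section Key
variable {E : Type*} [Field E] [Valued E Zm0]

lemma v_nat_not_lt_one {p n : ℕ} (hplt : (Valued.v ((p : E)) : Zm0) < 1)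
    (hnp : n.Coprime p) : ¬ ((Valued.v ((n : E)) : Zm0) < 1) := by
  intro hlt
  obtain ⟨a, b, hab⟩ := Nat.isCoprime_iff_coprime.mpr hnp
  have h1 : ((a : E) * (n : E) + (b : E) * (p : E)) = 1 := by
    have := congrArg (Int.cast : ℤ → E) hab
    push_cast at this
    exact this
  have hle : (1 : Zm0) ≤ max (Valued.v ((a : E) * (n : E))) (Valued.v ((b : E) * (p : E))) := by
    rw [show (1 : Zm0) = Valued.v ((a : E) * (n : E) + (b : E) * (p : E)) by rw [h1, map_one]]
    exact Valued.v.map_add _ _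
  have h2 : Valued.v ((a : E) * (n : E)) < 1 := by
    rw [map_mul]
    calc Valued.v ((a : E)) * Valued.v ((n : E)) ≤ 1 * Valued.v ((n : E)) :=
          mul_le_mul_left (vint_le_one E a) _
      _ = Valued.v ((n : E)) := one_mul _
      _ < 1 := hlt
  have h3 : Valued.v ((b : E) * (p : E)) < 1 := by
    rw [map_mul]
    calc Valued.v ((b : E)) * Valued.v ((p : E)) ≤ 1 * Valued.v ((p : E)) :=
          mul_le_mul_left (vint_le_one E b) _
      _ = Valued.v ((p : E)) := one_mul _
      _ < 1 := hplt
  exact absurd hle (not_le.mpr (max_lt h2 h3))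

lemma key_lemma (hfin : Finite (residueField E)) {p : ℕ}
    (hplt : (Valued.v ((p : E)) : Zm0) < 1)
    {n : ℕ} (hn : 0 < n) (hnp : n.Coprime p) (u : Eˣ) (hu : u ^ n = 1) :
    u ^ (Nat.card (residueField E) - 1) = 1 := by
  classical
  haveI : Fintype (residueField E) := Fintype.ofFinite _
  set q := Nat.card (residueField E) with hq
  have hqcard : q = Fintype.card (residueField E) := Nat.card_eq_fintype_card
  have huE : ((u : E)) ^ n = 1 := by exact_mod_cast congrArg (Units.coeHom E) hu
  have hvu : (Valued.v ((u : E)) : Zm0) = 1 := by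
    have h0 : (Valued.v ((u : E)) : Zm0) ≠ 0 := Valued.v.ne_zero_iff.mpr (Units.ne_zero u)
    obtain ⟨g, hg⟩ := WithZero.ne_zero_iff_exists.mp h0
    have hgn : ((g ^ n : Multiplicative ℤ) : Zm0) = ((1 : Multiplicative ℤ) : Zm0) := by
      rw [WithZero.coe_pow, hg, ← Valuation.map_pow, huE, map_one, WithZero.coe_one]
    have hg1 : g ^ n = 1 := WithZero.coe_inj.mp hgn
    have htoAdd : (n : ℤ) * Multiplicative.toAdd g = 0 := by
      have := congrArg Multiplicative.toAdd hg1
      simpa [toAdd_pow, nsmul_eq_mul] using this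
    have : Multiplicative.toAdd g = 0 := by
      rcases mul_eq_zero.mp htoAdd with h | h
      · exact absurd h (by exact_mod_cast hn.ne')
      · exact h
    have : g = 1 := by
      have := congrArg Multiplicative.ofAdd this
      simpa using this
    rw [← hg, this, WithZero.coe_one]
  have hvui : (Valued.v (((u⁻¹ : Eˣ) : E)) : Zm0) = 1 := by
    have : Valued.v (((u⁻¹ : Eˣ) : E)) * Valued.v ((u : E)) = 1 := by
      rw [← map_mul]
      norm_cast
      rw [inv_mul_cancel]
      exact map_one _
    rwa [hvu, mul_one] at this
  have hu_mem : ((u : E)) ∈ ringOfIntegers E := hvu.le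
  have hui_mem : (((u⁻¹ : Eˣ) : E)) ∈ ringOfIntegers E := hvui.le
  set U : (ringOfIntegers E)ˣ :=
    ⟨⟨(u : E), hu_mem⟩, ⟨((u⁻¹ : Eˣ) : E), hui_mem⟩,
      Subtype.ext (by simp), Subtype.ext (by simp)⟩ with hU
  have hUres : IsLocalRing.residue (ringOfIntegers E) (U : ringOfIntegers E) ≠ 0 :=
    (U.isUnit.map (IsLocalRing.residue (ringOfIntegers E))).ne_zero
  have hpow := FiniteField.pow_card_sub_one_eq_one _ hUres
  have hres0 : IsLocalRing.residue (ringOfIntegers E)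
      ((U : ringOfIntegers E) ^ (q - 1) - 1) = 0 := by
    rw [map_sub, map_pow, map_one, hqcard, hpow, sub_self]
  have hwlt' : (Valued.v ((u : E) ^ (q - 1) - 1) : Zm0) < 1 := by
    have := v_lt_one_of_residue_eq_zero hres0
    have hcoe : (((U : ringOfIntegers E) ^ (q - 1) - 1 : ringOfIntegers E) : E)
        = (u : E) ^ (q - 1) - 1 := by push_cast; rfl
    rwa [hcoe] at this
  set w : E := (u : E) ^ (q - 1) with hw
  have hvw : (Valued.v w : Zm0) = 1 := by rw [hw, map_pow, hvu, one_pow]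
  have hwn : w ^ n = 1 := by rw [hw, ← pow_mul, mul_comm, pow_mul, huE, one_pow]
  suffices hw1 : w = 1 by
    ext
    rw [Units.val_pow_eq_pow_val, Units.val_one]
    exact hw1
  by_contra hne
  have hsum : (∑ i ∈ Finset.range n, w ^ i) * (w - 1) = 0 := by
    rw [geom_sum_mul, hwn, sub_self]
  have hsum0 : (∑ i ∈ Finset.range n, w ^ i) = 0 := by
    rcases mul_eq_zero.mp hsum with h | h
    · exact h
    · exact absurd (sub_eq_zero.mp h) hne
  have hterm : ∀ i : ℕ, (Valued.v (w ^ i - 1) : Zm0) < 1 := by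
    intro i
    rw [show w ^ i - 1 = (∑ j ∈ Finset.range i, w ^ j) * (w - 1) from (geom_sum_mul w i).symm,
      map_mul]
    have h1 : (Valued.v (∑ j ∈ Finset.range i, w ^ j) : Zm0) ≤ 1 :=
      Valued.v.map_sum_le (fun j _ => by rw [map_pow, hvw, one_pow])
    calc Valued.v (∑ j ∈ Finset.range i, w ^ j) * Valued.v (w - 1)
        ≤ 1 * Valued.v (w - 1) := mul_le_mul_left h1 _
      _ = Valued.v (w - 1) := one_mul _
      _ < 1 := hwlt'
  have hn_eq : (n : E) = ∑ i ∈ Finset.range n, (1 - w ^ i) := by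
    rw [Finset.sum_sub_distrib, hsum0, sub_zero, Finset.sum_const, Finset.card_range,
      nsmul_eq_mul, mul_one]
  have hvn : (Valued.v ((n : E)) : Zm0) < 1 := by
    rw [hn_eq]
    exact Valued.v.map_sum_lt one_ne_zero
      (fun i _ => by rw [show (1 : E) - w ^ i = -(w ^ i - 1) by ring, Valuation.map_neg]
                     exact hterm i)
  exact v_nat_not_lt_one hplt hnp hvn

end Key

/-- Let `E/F` be a finite tamely ramified Galois extension of
nonarchimedean local fields. Then `C_E` is stable under `Gal(E/F)`:
`σ (C_E) = C_E` for every `σ ∈ Gal(E/F)`. -/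
theorem stmt4 (F E : Type*) [Field F] [Valued F Zm0] [Field E] [Valued E Zm0]
    [Algebra F E] [FiniteDimensional F E] [IsGalois F E]
    (hF : IsNALocalField F) (hE : IsNALocalField E)
    (p : ℕ) (hp : p.Prime) (hchar : CharP (residueField F) p)
    (e : ℕ) (he : 0 < e)
    (hcomp : ∀ x : F, nval E (algebraMap F E x) = e * nval F x)
    (htame : Nat.Coprime e p)
    (πF : F) (hπF : IsUniformizer F πF)
    (πE : Eˣ) (hπE : IsUniformizer E (πE : E))
    (z : E) (hz : IsRootOfUnityPrimeTo p z)
    (hrel : (πE : E) ^ e * z = algebraMap F E πF)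
    (σ : E ≃ₐ[F] E) :
    Subgroup.map (Units.map (σ : E →* E)) (CGroup E πE) = CGroup E πE := by
  -- v_E(p) < 1
  have hplt : (Valued.v ((p : E)) : Zm0) < 1 := by
    by_cases hp0 : (p : F) = 0
    · have : (p : E) = 0 := by
        rw [← map_natCast (algebraMap F E) p, hp0, map_zero]
      rw [this, map_zero]
      exact zero_lt_one
    · have hresF : IsLocalRing.residue (ringOfIntegers F) ((p : ℕ) : ringOfIntegers F) = 0 := by
        rw [map_natCast]
        exact CharP.cast_eq_zero (residueField F) p
      have hpFlt : (Valued.v ((p : F)) : Zm0) < 1 := by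
        have := v_lt_one_of_residue_eq_zero hresF
        rwa [show ((((p : ℕ) : ringOfIntegers F)) : F) = (p : F) by push_cast; rfl] at this
      have hnvF : 0 < nval F (p : F) := (nval_pos_iff hp0).mpr hpFlt
      have hmapne : algebraMap F E ((p : F)) ≠ 0 := by
        intro h
        exact hp0 ((algebraMap F E).injective (by rw [h, map_zero]))
      have hnvE : 0 < nval E (algebraMap F E ((p : F))) := by
        rw [hcomp]
        positivity
      have := (nval_pos_iff hmapne).mp hnvE
      rwa [map_natCast] at this
  obtain ⟨n, hn, hnp, hzn⟩ := hz
  have hz0 : z ≠ 0 := fun h => by simp [h, zero_pow hn.ne'] at hzn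
  have hπ0 : ((πE : E)) ≠ 0 := Units.ne_zero _
  -- the key inclusion, for an arbitrary Galois element
  have main : ∀ τ : E ≃ₐ[F] E,
      Subgroup.map (Units.map (τ : E →* E)) (CGroup E πE) ≤ CGroup E πE := by
    intro τ
    rw [CGroup, MonoidHom.map_closure]
    refine (Subgroup.closure_le _).mpr ?_
    rintro x ⟨y, hy, rfl⟩
    rcases hy with hy | hy
    · -- y = πE
      rw [Set.mem_singleton_iff] at hy
      rw [SetLike.mem_coe, hy]
      have hτrel : (τ ((πE : E))) ^ e * τ z = (πE : E) ^ e * z := by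
        have h1 : τ ((πE : E) ^ e * z) = algebraMap F E πF := by
          rw [hrel]; exact τ.commutes πF
        rw [map_mul, map_pow] at h1
        rw [h1, hrel]
      set ζ : Eˣ := (Units.map (τ : E →* E) πE) * πE⁻¹ with hζ
      have hζcoe : (ζ : E) = τ ((πE : E)) * ((πE : E))⁻¹ := by
        simp [hζ]
      have hτzn : (τ z) ^ n = 1 := by rw [← map_pow, hzn, map_one]
      have hτz0 : τ z ≠ 0 := fun h => by simp [h, zero_pow hn.ne'] at hτzn
      have hζe : (ζ : E) ^ e = z / τ z := by
        rw [hζcoe, mul_pow, inv_pow, ← div_eq_mul_inv,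
          div_eq_div_iff (pow_ne_zero e hπ0) hτz0, hτrel]
        ring
      have hζen : (ζ : E) ^ (e * n) = 1 := by
        rw [pow_mul, hζe, div_pow, hzn, hτzn, div_one]
      have hζn : ζ ^ (e * n) = 1 := by
        ext
        rw [Units.val_pow_eq_pow_val, hζen, Units.val_one]
      have hζq : ζ ^ (Nat.card (residueField E) - 1) = 1 :=
        key_lemma hE.finiteResidueField hplt (Nat.mul_pos he hn) (htame.mul hnp) ζ hζn
      have heq : Units.map (τ : E →* E) πE = ζ * πE := by
        rw [hζ, inv_mul_cancel_right]
      rw [heq]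
      exact mul_mem (Subgroup.subset_closure (Set.mem_union_right _ hζq))
        (Subgroup.subset_closure (Set.mem_union_left _ rfl))
    · -- y is a (q-1)-st root of unity
      rw [SetLike.mem_coe]
      refine Subgroup.subset_closure (Set.mem_union_right _ ?_)
      show (Units.map (τ : E →* E) y) ^ (Nat.card (residueField E) - 1) = 1
      rw [← map_pow, hy, map_one]
  refine le_antisymm (main σ) ?_
  intro x hx
  have hsx : Units.map ((σ.symm : E ≃ₐ[F] E) : E →* E) x ∈ CGroup E πE :=
    main σ.symm ⟨x, hx, rfl⟩
  refine ⟨_, hsx, ?_⟩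
  ext
  simp
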